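/- There exists a universal constant C > 0 such that for every n ≥ 2 and every B ≥ 1, the critical Erdős–Rényi random graph G(n,1/n) satisfies E[ (1/n) Σ_{x ∈ [n]} ( diam(C(x)) ∧ (B n^{1/3}) ) ] ≤ C log(Bn); equivalently, E[ E_S[ diam(S₁) ∧ (B n^{1/3}) ] ] ≤ C log(Bn). -/

import Mathlib

open MeasureTheory Filter
open scoped ENNReal

/-- The Erdős–Rényi `G(n, 1/n)` measure on edge configurations of `K_n`:
each potential edge is retained (`true`) independently with probability `1/n`. -/
noncomputable def erMeasure (n : ℕ) : Measure (Sym2 (Fin n) → Bool) :=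
  Measure.pi fun _ => (PMF.bernoulli (min (n : ℝ≥0∞)⁻¹ 1).toNNReal
    (le_of_le_of_eq (ENNReal.toNNReal_mono ENNReal.one_ne_top (min_le_right _ _)) ENNReal.toNNReal_one)).toMeasure

instance (n : ℕ) : IsProbabilityMeasure (erMeasure n) := by
  unfold erMeasure; infer_instance

/-- The simple graph on `Fin n` determined by an edge configuration. -/
def graphOf {n : ℕ} (ω : Sym2 (Fin n) → Bool) : SimpleGraph (Fin n) where
  Adj u v := u ≠ v ∧ ω s(u, v) = true
  symm := by
    constructor
    intro u v h
    exact ⟨Ne.symm h.1, by rw [Sym2.eq_swap]; exact h.2⟩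
  loopless := by
    constructor
    intro u h
    exact h.1 rfl

/-- Size of the connected component of `v`. -/
noncomputable def compSize {n : ℕ} (G : SimpleGraph (Fin n)) (v : Fin n) : ℕ :=
  Nat.card {w : Fin n | G.Reachable v w}

/-- Diameter of a finite graph: maximal distance between two vertices. -/
noncomputable def gdiam {n : ℕ} (G : SimpleGraph (Fin n)) : ℕ :=
  Finset.univ.sup fun p : Fin n × Fin n => G.dist p.1 p.2

open scoped Classical in
/-- Diameter of the connected component of `x`. -/
noncomputable def compDiam {n : ℕ} (G : SimpleGraph (Fin n)) (x : Fin n) : ℕ :=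
  Finset.univ.sup fun p : Fin n × Fin n =>
    if G.Reachable x p.1 ∧ G.Reachable x p.2 then G.dist p.1 p.2 else 0

/-- Product of the weights of the edges of `T`. -/
noncomputable def treeWeight {n : ℕ} (w : Sym2 (Fin n) → ℝ) (T : SimpleGraph (Fin n)) : ℝ :=
  letI : Fintype T.edgeSet := Fintype.ofFinite _
  ∏ e ∈ T.edgeSet.toFinset, w e

open scoped Classical in
/-- Probability that the `w`-weighted uniform spanning tree of `K_n` lies in `E`. -/
noncomputable def ustProb {n : ℕ} (w : Sym2 (Fin n) → ℝ) (E : Set (SimpleGraph (Fin n))) : ℝ :=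
  (∑ T ∈ Finset.univ.filter (fun T : SimpleGraph (Fin n) => T.IsTree ∧ T ∈ E), treeWeight w T) /
    (∑ T ∈ Finset.univ.filter (fun T : SimpleGraph (Fin n) => T.IsTree), treeWeight w T)

/-- The random weights: heavy edges get weight `n^(1+γ)`, the others weight `1`. -/
noncomputable def weightFn (n : ℕ) (γ : ℝ) (ω : Sym2 (Fin n) → Bool) (e : Sym2 (Fin n)) : ℝ :=
  if ω e then (n : ℝ) ^ ((1 : ℝ) + γ) else 1

/-! ### Auxiliary development -/

namespace SBD

open Finset

abbrev Conf (n : ℕ) := Sym2 (Fin n) → Bool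

/-- Weight of a single edge state. -/
noncomputable def w (n : ℕ) (b : Bool) : ℝ := if b then (n : ℝ)⁻¹ else 1 - (n : ℝ)⁻¹

/-- Weight (probability) of a configuration. -/
noncomputable def W (n : ℕ) (ω : Conf n) : ℝ := ∏ e, w n (ω e)

open scoped Classical in
/-- Probability of an event, as a finite sum. -/
noncomputable def Pr (n : ℕ) (A : Conf n → Prop) : ℝ := ∑ ω, if A ω then W n ω else 0

variable {n : ℕ}

lemma w_nonneg (hn : 1 ≤ n) (b : Bool) : 0 ≤ w n b := by
  have h1 : (1 : ℝ) ≤ (n : ℝ) := by exact_mod_cast hn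
  have h2 : (n : ℝ)⁻¹ ≤ 1 := inv_le_one_of_one_le₀ h1
  have h3 : (0 : ℝ) ≤ (n : ℝ)⁻¹ := by positivity
  rcases b <;> simp [w] <;> linarith

lemma w_add (hn : 1 ≤ n) : w n true + w n false = 1 := by simp [w]

lemma prod_w_nonneg (hn : 1 ≤ n) {ι : Type*} [Fintype ι] (f : ι → Bool) :
    0 ≤ ∏ i, w n (f i) :=
  Finset.prod_nonneg fun i _ => w_nonneg hn _

/-- Master identity: sum over Boolean configurations of a product factorizes. -/
lemma sum_prod_bool {ι : Type*} [Fintype ι] [DecidableEq ι] (g : ι → Bool → ℝ) :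
    ∑ f : ι → Bool, ∏ i, g i (f i) = ∏ i, (g i true + g i false) := by
  classical
  calc ∑ f : ι → Bool, ∏ i, g i (f i)
      = ∑ f ∈ Fintype.piFinset (fun _ : ι => (Finset.univ : Finset Bool)),
          ∏ i, g i (f i) := by rw [Fintype.piFinset_univ]
    _ = ∏ i, ∑ b ∈ (Finset.univ : Finset Bool), g i b := (Finset.prod_univ_sum _ _).symm
    _ = ∏ i, (g i true + g i false) := by
        refine Finset.prod_congr rfl fun i _ => ?_
        simp [Fintype.sum_bool]

lemma sum_W_one (hn : 1 ≤ n) {ι : Type*} [Fintype ι] [DecidableEq ι] :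
    ∑ f : ι → Bool, ∏ i, w n (f i) = 1 := by
  rw [sum_prod_bool]
  rw [Finset.prod_congr rfl fun i _ => w_add hn]
  simp

lemma Pr_nonneg (hn : 1 ≤ n) (A : Conf n → Prop) : 0 ≤ Pr n A := by
  classical
  refine Finset.sum_nonneg fun ω _ => ?_
  by_cases h : A ω <;> simp [h, Pr]
  · exact prod_w_nonneg hn _

lemma Pr_le_one (hn : 1 ≤ n) (A : Conf n → Prop) : Pr n A ≤ 1 := by
  classical
  have h1 : Pr n A ≤ ∑ ω : Conf n, W n ω := by
    refine Finset.sum_le_sum fun ω _ => ?_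
    by_cases h : A ω <;> simp [h]
    exact prod_w_nonneg hn _
  have h2 : ∑ ω : Conf n, W n ω = 1 := sum_W_one hn
  linarith

lemma Pr_eq (A : Conf n → Prop) [DecidablePred A] :
    Pr n A = ∑ ω, if A ω then W n ω else 0 := by
  classical
  unfold Pr
  refine Finset.sum_congr rfl fun ω _ => ?_
  by_cases h : A ω
  · rw [if_pos h, if_pos h]
  · rw [if_neg h, if_neg h]

/-! ### Graphs on subsets -/

/-- The graph induced by `ω` on the vertex set `S`. -/
def graphOn (S : Finset (Fin n)) (ω : Conf n) : SimpleGraph (Fin n) where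
  Adj u v := u ∈ S ∧ v ∈ S ∧ u ≠ v ∧ ω s(u, v) = true
  symm := by
    constructor
    intro u v h
    exact ⟨h.2.1, h.1, h.2.2.1.symm, by rw [Sym2.eq_swap]; exact h.2.2.2⟩
  loopless := by constructor; intro u h; exact h.2.2.1 rfl

lemma graphOf_eq (ω : Conf n) : graphOf ω = graphOn Finset.univ ω := by
  ext u v
  simp [graphOf, graphOn]

open scoped Classical in
/-- Radius of the component of `x` (eccentricity of `x`). -/
noncomputable def rad (G : SimpleGraph (Fin n)) (x : Fin n) : ℕ :=
  Finset.univ.sup fun v => if G.Reachable x v then G.dist x v else 0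

lemma dist_le_rad {G : SimpleGraph (Fin n)} {x v : Fin n} (h : G.Reachable x v) :
    G.dist x v ≤ rad G x := by
  classical
  refine le_trans ?_ (Finset.le_sup (Finset.mem_univ v))
  rw [if_pos h]

lemma compDiam_le_two_rad (G : SimpleGraph (Fin n)) (x : Fin n) :
    compDiam G x ≤ 2 * rad G x := by
  classical
  refine Finset.sup_le ?_
  rintro ⟨u, v⟩ -
  dsimp only
  by_cases h : G.Reachable x u ∧ G.Reachable x v
  · rw [if_pos h]
    obtain ⟨p, -, hp⟩ := h.1.exists_path_of_dist
    obtain ⟨q, -, hq⟩ := h.2.exists_path_of_dist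
    have hle := SimpleGraph.dist_le (p.reverse.append q)
    rw [SimpleGraph.Walk.length_append, SimpleGraph.Walk.length_reverse, hp, hq] at hle
    have h1 := dist_le_rad h.1
    have h2 := dist_le_rad h.2
    omega
  · rw [if_neg h]; exact Nat.zero_le _

lemma graphOn_mono {S T : Finset (Fin n)} (h : T ⊆ S) (ω : Conf n) :
    graphOn T ω ≤ graphOn S ω := by
  intro u v hadj
  exact ⟨h hadj.1, h hadj.2.1, hadj.2.2⟩

lemma dist_le_of_le {G H : SimpleGraph (Fin n)} (hGH : G ≤ H) {u v : Fin n}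
    (h : G.Reachable u v) : H.dist u v ≤ G.dist u v := by
  obtain ⟨p, -, hp⟩ := h.exists_path_of_dist
  have := SimpleGraph.dist_le (p.mapLe hGH)
  have hlen : (p.mapLe hGH).length = p.length := by simp [SimpleGraph.Walk.mapLe]
  rw [hlen, hp] at this
  exact this

/-- If two configurations agree on all edges not containing `x`, the induced graphs on a
set avoiding `x` agree. -/
lemma graphOn_congr {T : Finset (Fin n)} {x : Fin n} (hx : x ∉ T) {ω ω' : Conf n}
    (h : ∀ e : Sym2 (Fin n), x ∉ e → ω e = ω' e) :
    graphOn T ω = graphOn T ω' := by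
  ext u v
  constructor
  · rintro ⟨hu, hv, huv, he⟩
    refine ⟨hu, hv, huv, ?_⟩
    rw [← h s(u, v) ?_]
    · exact he
    · intro hmem
      rcases Sym2.mem_iff.1 hmem with rfl | rfl
      · exact hx hu
      · exact hx hv
  · rintro ⟨hu, hv, huv, he⟩
    refine ⟨hu, hv, huv, ?_⟩
    rw [h s(u, v) ?_]
    · exact he
    · intro hmem
      rcases Sym2.mem_iff.1 hmem with rfl | rfl
      · exact hx hu
      · exact hx hv

/-- The key combinatorial step: if the radius of `x` in `G[S]` is at least `k+1`, then `x`
has a neighbor `y ∈ S \ {x}` whose radius in `G[S \ {x}]` is at least `k`. -/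
lemma rad_step {S : Finset (Fin n)} {x : Fin n} {k : ℕ} (ω : Conf n)
    (h : k + 1 ≤ rad (graphOn S ω) x) :
    ∃ y ∈ S.erase x, ω s(x, y) = true ∧ k ≤ rad (graphOn (S.erase x) ω) y := by
  classical
  set G := graphOn S ω with hG
  unfold rad at h
  obtain ⟨v, -, hv⟩ := (Finset.le_sup_iff (by simp : (⊥ : ℕ) < k + 1)).1 h
  have hreach : G.Reachable x v := by
    by_contra hr
    rw [if_neg hr] at hv
    omega
  rw [if_pos hreach] at hv
  obtain ⟨p, hp, hlen⟩ := hreach.exists_path_of_dist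
  cases p with
  | nil =>
      rw [SimpleGraph.Walk.length_nil] at hlen
      rw [← hlen] at hv
      omega
  | @cons _ y _ hadj q =>
      rw [SimpleGraph.Walk.length_cons] at hlen
      obtain ⟨hq, hxq⟩ := (SimpleGraph.Walk.cons_isPath_iff hadj q).1 hp
      have hyS : y ∈ S := hadj.2.1
      have hxy : x ≠ y := hadj.2.2.1
      have hωxy : ω s(x, y) = true := hadj.2.2.2
      have hyT : y ∈ S.erase x := Finset.mem_erase.2 ⟨hxy.symm, hyS⟩
      -- transfer the walk q into the graph on S.erase x
      have hedges : ∀ e ∈ q.edges, e ∈ (graphOn (S.erase x) ω).edgeSet := by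
        intro e he
        induction e with
        | h a b =>
          have ha : a ∈ q.support := q.fst_mem_support_of_mem_edges he
          have hb : b ∈ q.support := q.snd_mem_support_of_mem_edges he
          have hGadj : G.Adj a b := G.mem_edgeSet.1 (q.edges_subset_edgeSet he)
          have hax : a ≠ x := fun hh => hxq (hh ▸ ha)
          have hbx : b ≠ x := fun hh => hxq (hh ▸ hb)
          exact (graphOn (S.erase x) ω).mem_edgeSet.2
            ⟨Finset.mem_erase.2 ⟨hax, hGadj.1⟩, Finset.mem_erase.2 ⟨hbx, hGadj.2.1⟩,
              hGadj.2.2.1, hGadj.2.2.2⟩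
      set q' := q.transfer (graphOn (S.erase x) ω) hedges with hq'
      have hq'reach : (graphOn (S.erase x) ω).Reachable y v := q'.reachable
      -- k ≤ dist G y v
      have hdyv : k ≤ G.dist y v := by
        have hry : G.Reachable y v := q.reachable
        obtain ⟨r, -, hr⟩ := hry.exists_path_of_dist
        have := SimpleGraph.dist_le (SimpleGraph.Walk.cons hadj r)
        rw [SimpleGraph.Walk.length_cons, hr] at this
        omega
      -- distance in the smaller graph is at least that in the bigger one
      have hmono : G.dist y v ≤ (graphOn (S.erase x) ω).dist y v :=
        dist_le_of_le (graphOn_mono (Finset.erase_subset _ _) ω) hq'reach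
      refine ⟨y, hyT, hωxy, ?_⟩
      calc k ≤ G.dist y v := hdyv
        _ ≤ (graphOn (S.erase x) ω).dist y v := hmono
        _ ≤ rad (graphOn (S.erase x) ω) y := dist_le_rad hq'reach

end SBD

/-! ### Analytic lemmas -/

namespace SBD

open Finset

lemma exp_neg_lb {u : ℝ} (h0 : 0 ≤ u) (h1 : u ≤ 1) :
    1 - u + u ^ 2 / 3 ≤ Real.exp (-u) := by
  have key : ∀ v ∈ Set.Icc (0 : ℝ) 1, (1 - v + v ^ 2 / 3) * Real.exp v ≤ 1 := by
    have hder : ∀ v : ℝ, HasDerivAt (fun z => (1 - z + z ^ 2 / 3) * Real.exp z)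
        ((v * (v - 1) / 3) * Real.exp v) v := by
      intro v
      have h1' : HasDerivAt (fun z : ℝ => 1 - z + z ^ 2 / 3) (-1 + 2 * v / 3) v := by
        have : HasDerivAt (fun z : ℝ => 1 - z + z ^ 2 / 3)
            (0 - 1 + (2 * v ^ 1) / 3) v := by
          exact (((hasDerivAt_const v (1 : ℝ)).sub (hasDerivAt_id v)).add
            ((hasDerivAt_pow 2 v).div_const 3))
        convert this using 1
        ring
      have h2' := Real.hasDerivAt_exp v
      have := h1'.mul h2'
      refine this.congr_deriv ?_
      ring
    have hanti : AntitoneOn (fun z => (1 - z + z ^ 2 / 3) * Real.exp z)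
        (Set.Icc (0 : ℝ) 1) := by
      refine antitoneOn_of_deriv_nonpos (convex_Icc 0 1) ?_ ?_ ?_
      · exact (Continuous.mul (by continuity) Real.continuous_exp).continuousOn
      · intro z hz
        exact (hder z).differentiableAt.differentiableWithinAt
      · intro z hz
        rw [interior_Icc] at hz
        rw [(hder z).deriv]
        have hz0 := hz.1
        have hz1 := hz.2
        have : z * (z - 1) ≤ 0 := mul_nonpos_of_nonneg_of_nonpos (le_of_lt hz0) (by linarith)
        have hexp := Real.exp_pos z
        nlinarith
    intro v hv
    have := hanti (Set.left_mem_Icc.2 zero_le_one) hv hv.1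
    simpa using this
  have hu := key u ⟨h0, h1⟩
  have hexp := Real.exp_pos u
  have h2 : 1 - u + u ^ 2 / 3 ≤ 1 / Real.exp u := (le_div_iff₀ hexp).2 (by linarith)
  rw [Real.exp_neg, ← one_div]
  exact h2

lemma anal {n : ℕ} (hn : 2 ≤ n) {s : ℝ} (hs0 : 0 ≤ s) (hs1 : s ≤ 1) :
    1 - (1 - (n : ℝ)⁻¹) ^ (((n : ℝ) - 1) * s) ≤ s - s ^ 2 / 3 := by
  have hn2 : (2 : ℝ) ≤ (n : ℝ) := by exact_mod_cast hn
  have hn1 : (1 : ℝ) ≤ (n : ℝ) - 1 := by linarith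
  have hnpos : (0 : ℝ) < (n : ℝ) := by linarith
  have hinv : (n : ℝ)⁻¹ ≤ (2 : ℝ)⁻¹ := by
    apply inv_anti₀ (by norm_num) hn2
  have hq : (0 : ℝ) < 1 - (n : ℝ)⁻¹ := by
    have : ((2 : ℝ))⁻¹ = 1 / 2 := by norm_num
    linarith
  -- log (1 - 1/n) ≥ -(1/(n-1))
  have hlog : -(1 / ((n : ℝ) - 1)) ≤ Real.log (1 - (n : ℝ)⁻¹) := by
    have hpos : (0 : ℝ) < (n : ℝ) / ((n : ℝ) - 1) := by positivity
    have h1 := Real.log_le_sub_one_of_pos hpos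
    have heq : ((n : ℝ) / ((n : ℝ) - 1))⁻¹ = 1 - (n : ℝ)⁻¹ := by
      field_simp
    have h2 : Real.log (1 - (n : ℝ)⁻¹) = - Real.log ((n : ℝ) / ((n : ℝ) - 1)) := by
      rw [← heq, Real.log_inv]
    rw [h2]
    have h3 : (n : ℝ) / ((n : ℝ) - 1) - 1 = 1 / ((n : ℝ) - 1) := by
      field_simp
      ring
    rw [h3] at h1
    linarith
  have harg : -s ≤ ((n : ℝ) - 1) * s * Real.log (1 - (n : ℝ)⁻¹) := by
    have hmul : ((n : ℝ) - 1) * s * (-(1 / ((n : ℝ) - 1))) ≤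
        ((n : ℝ) - 1) * s * Real.log (1 - (n : ℝ)⁻¹) := by
      apply mul_le_mul_of_nonneg_left hlog
      positivity
    have hne : ((n : ℝ) - 1) ≠ 0 := by linarith
    have heq : ((n : ℝ) - 1) * s * (-(1 / ((n : ℝ) - 1))) = -s := by
      field_simp
    linarith [heq ▸ hmul]
  calc 1 - (1 - (n : ℝ)⁻¹) ^ (((n : ℝ) - 1) * s)
      = 1 - Real.exp (Real.log (1 - (n : ℝ)⁻¹) * (((n : ℝ) - 1) * s)) := by
        rw [Real.rpow_def_of_pos hq]
    _ ≤ 1 - Real.exp (-s) := by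
        have := Real.exp_le_exp.2 (by linarith [harg] :
          (-s) ≤ Real.log (1 - (n : ℝ)⁻¹) * (((n : ℝ) - 1) * s))
        linarith
    _ ≤ 1 - (1 - s + s ^ 2 / 3) := by
        have := exp_neg_lb hs0 hs1
        linarith
    _ = s - s ^ 2 / 3 := by ring

lemma min_step {k : ℕ} (hk : 1 ≤ k) :
    (min 1 (3 / (k : ℝ))) - (min 1 (3 / (k : ℝ))) ^ 2 / 3 ≤ 3 / ((k : ℝ) + 1) := by
  have hk1 : (1 : ℝ) ≤ (k : ℝ) := by exact_mod_cast hk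
  have hkpos : (0 : ℝ) < (k : ℝ) := by linarith
  rcases le_total ((k : ℝ)) 3 with h3 | h3
  · have hmin : min 1 (3 / (k : ℝ)) = 1 := by
      apply min_eq_left
      rw [le_div_iff₀ hkpos]
      linarith
    rw [hmin]
    rw [le_div_iff₀ (by linarith : (0:ℝ) < (k : ℝ) + 1)]
    nlinarith
  · have hmin : min 1 (3 / (k : ℝ)) = 3 / (k : ℝ) := by
      apply min_eq_right
      rw [div_le_one hkpos]
      linarith
    rw [hmin]
    have hkne : (k : ℝ) ≠ 0 := by positivity
    have h1 : 3 / (k : ℝ) - (3 / (k : ℝ)) ^ 2 / 3 = 3 * ((k : ℝ) - 1) / (k : ℝ) ^ 2 := by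
      field_simp
    rw [h1, div_le_div_iff₀ (by positivity) (by positivity)]
    nlinarith

end SBD

/-! ### Probabilistic core -/

namespace SBD

open Finset

set_option maxHeartbeats 2000000 in
lemma prob_core (hn : 2 ≤ n) {S : Finset (Fin n)} {x : Fin n} (hx : x ∈ S)
    (k : ℕ) {s : ℝ} (hs0 : 0 ≤ s)
    (hIH : ∀ y ∈ S.erase x,
      Pr n (fun ω => k ≤ rad (graphOn (S.erase x) ω) y) ≤ s) :
    Pr n (fun ω => k + 1 ≤ rad (graphOn S ω) x)
      ≤ 1 - (1 - (n : ℝ)⁻¹) ^ (((n : ℝ) - 1) * s) := by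
  classical
  have hn1 : 1 ≤ n := by omega
  have hn2 : (2 : ℝ) ≤ (n : ℝ) := by exact_mod_cast hn
  set q : ℝ := 1 - (n : ℝ)⁻¹ with hqdef
  have hinv : (n : ℝ)⁻¹ ≤ (2 : ℝ)⁻¹ := by
    apply inv_anti₀ (by norm_num) hn2
  have hq0 : 0 < q := by
    rw [hqdef]
    have : ((2 : ℝ))⁻¹ = 1 / 2 := by norm_num
    linarith
  have hq1 : q ≤ 1 := by
    rw [hqdef]
    have : (0 : ℝ) ≤ (n : ℝ)⁻¹ := by positivity
    linarith
  set T := S.erase x with hT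
  have hxT : x ∉ T := Finset.notMem_erase x S
  set P : Sym2 (Fin n) → Prop := fun e => x ∈ e with hP
  set ε := Equiv.piEquivPiSubtypeProd P (fun _ => Bool) with hε
  set W₁ : ({e : Sym2 (Fin n) // P e} → Bool) → ℝ := fun ξ => ∏ i, w n (ξ i) with hW₁
  set W₂ : ({e : Sym2 (Fin n) // ¬ P e} → Bool) → ℝ := fun η => ∏ i, w n (η i) with hW₂
  have hsymm_val : ∀ ξ η (e : Sym2 (Fin n)),
      ε.symm (ξ, η) e = if h : P e then ξ ⟨e, h⟩ else η ⟨e, h⟩ := by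
    intro ξ η e
    rw [hε]
    exact Equiv.piEquivPiSubtypeProd_symm_apply P (fun _ => Bool) (ξ, η) e
  have hW12 : ∀ ξ η, W n (ε.symm (ξ, η)) = W₁ ξ * W₂ η := by
    intro ξ η
    simp only [W, hW₁, hW₂]
    rw [← Fintype.prod_subtype_mul_prod_subtype P (fun e => w n (ε.symm (ξ, η) e))]
    congr 1
    · refine Finset.prod_congr rfl fun i _ => ?_
      rw [hsymm_val, dif_pos i.2]
    · refine Finset.prod_congr rfl fun i _ => ?_
      rw [hsymm_val, dif_neg i.2]
  have hreindex : ∀ F : Conf n → ℝ, ∑ ω, F ω = ∑ ξ, ∑ η, F (ε.symm (ξ, η)) := by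
    intro F
    rw [← Equiv.sum_comp ε.symm F, Fintype.sum_prod_type]
  set G' : ({e : Sym2 (Fin n) // ¬ P e} → Bool) → SimpleGraph (Fin n) :=
    fun η => graphOn T (ε.symm (fun _ => false, η)) with hG'def
  have hG' : ∀ ξ η, graphOn T (ε.symm (ξ, η)) = G' η := by
    intro ξ η
    rw [hG'def]
    refine graphOn_congr hxT fun e he => ?_
    rw [hsymm_val, hsymm_val, dif_neg he, dif_neg he]
  set Y : ({e : Sym2 (Fin n) // ¬ P e} → Bool) → Finset (Fin n) :=
    fun η => T.filter (fun y => k ≤ rad (G' η) y) with hYdef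
  set c : Fin n → {e : Sym2 (Fin n) // P e} := fun y => ⟨s(x, y), by simp [hP]⟩ with hcdef
  have hcinj : ∀ y y' : Fin n, y ≠ x → y' ≠ x → c y = c y' → y = y' := by
    intro y y' hy hy' hcc
    have hss : s(x, y) = s(x, y') := congrArg Subtype.val hcc
    rcases Sym2.eq_iff.1 hss with ⟨-, h⟩ | ⟨h1, h2⟩
    · exact h
    · exact absurd h2 hy
  have total₁ : ∑ ξ, W₁ ξ = 1 := by
    simp only [hW₁]
    exact sum_W_one hn1
  have total₂ : ∑ η, W₂ η = 1 := by
    simp only [hW₂]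
    exact sum_W_one hn1
  have hW₁0 : ∀ ξ, 0 ≤ W₁ ξ := fun ξ => by
    simp only [hW₁]; exact prod_w_nonneg hn1 _
  have hW₂0 : ∀ η, 0 ≤ W₂ η := fun η => by
    simp only [hW₂]; exact prod_w_nonneg hn1 _
  have hYx : ∀ η, ∀ y ∈ Y η, y ≠ x := by
    intro η y hy
    rw [hYdef] at hy
    exact Finset.ne_of_mem_erase (Finset.mem_filter.1 hy).1
  -- the constrained sum
  have hconstr : ∀ η, (∑ ξ, if ∀ y ∈ Y η, ξ (c y) = false then W₁ ξ else 0)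
      = q ^ (Y η).card := by
    intro η
    set im := (Y η).image c with him
    have hcard : im.card = (Y η).card := by
      rw [him]
      exact Finset.card_image_of_injOn
        (fun a ha b hb hab => hcinj a b (hYx η a ha) (hYx η b hb) hab)
    have hmem_im : ∀ y ∈ Y η, c y ∈ im := fun y hy => by
      rw [him]; exact Finset.mem_image_of_mem c hy
    have hpt : ∀ ξ : {e : Sym2 (Fin n) // P e} → Bool,
        (if ∀ y ∈ Y η, ξ (c y) = false then W₁ ξ else 0)
        = ∏ i, (w n (ξ i) * (if i ∈ im ∧ ξ i = true then 0 else 1)) := by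
      intro ξ
      by_cases hA : ∀ y ∈ Y η, ξ (c y) = false
      · rw [if_pos hA]
        simp only [hW₁]
        refine Finset.prod_congr rfl fun i _ => ?_
        have hni : ¬ (i ∈ im ∧ ξ i = true) := by
          rintro ⟨hi, hit⟩
          rw [him] at hi
          obtain ⟨y, hy, rfl⟩ := Finset.mem_image.1 hi
          rw [hA y hy] at hit
          exact Bool.false_ne_true hit
        rw [if_neg hni, mul_one]
      · rw [if_neg hA]
        push_neg at hA
        obtain ⟨y, hy, hne⟩ := hA
        have hyt : ξ (c y) = true := by
          cases hb : ξ (c y)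
          · exact absurd hb hne
          · rfl
        symm
        apply Finset.prod_eq_zero (Finset.mem_univ (c y))
        rw [if_pos ⟨hmem_im y hy, hyt⟩, mul_zero]
    have hfac : ∀ i : {e : Sym2 (Fin n) // P e},
        (w n true * (if i ∈ im ∧ (true : Bool) = true then 0 else 1) +
          w n false * (if i ∈ im ∧ (false : Bool) = true then 0 else 1))
        = if i ∈ im then q else 1 := by
      intro i
      by_cases hi : i ∈ im
      · simp [hi, w, hqdef]
      · simp only [hi, false_and, if_false, if_neg hi, mul_one]
        exact w_add hn1
    calc (∑ ξ : {e : Sym2 (Fin n) // P e} → Bool,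
            if ∀ y ∈ Y η, ξ (c y) = false then W₁ ξ else 0)
        = ∑ ξ : {e : Sym2 (Fin n) // P e} → Bool,
            ∏ i, (w n (ξ i) * (if i ∈ im ∧ ξ i = true then 0 else 1)) :=
          Finset.sum_congr rfl fun ξ _ => hpt ξ
      _ = ∏ i : {e : Sym2 (Fin n) // P e},
            (w n true * (if i ∈ im ∧ (true : Bool) = true then 0 else 1) +
              w n false * (if i ∈ im ∧ (false : Bool) = true then 0 else 1)) :=
          sum_prod_bool (fun i b => w n b * (if i ∈ im ∧ b = true then 0 else 1))
      _ = ∏ i : {e : Sym2 (Fin n) // P e}, (if i ∈ im then q else 1) :=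
          Finset.prod_congr rfl fun i _ => hfac i
      _ = q ^ (Y η).card := by
          rw [Finset.prod_ite_mem, Finset.univ_inter, Finset.prod_const, hcard]
  -- inner bound
  have inner_le : ∀ η,
      (∑ ξ, if k + 1 ≤ rad (graphOn S (ε.symm (ξ, η))) x then W₁ ξ else 0)
        ≤ 1 - q ^ (Y η).card := by
    intro η
    have hmono : ∀ ξ,
        (if k + 1 ≤ rad (graphOn S (ε.symm (ξ, η))) x then W₁ ξ else 0)
          ≤ (if ∃ y ∈ Y η, ξ (c y) = true then W₁ ξ else 0) := by
      intro ξ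
      by_cases hE : k + 1 ≤ rad (graphOn S (ε.symm (ξ, η))) x
      · rw [if_pos hE]
        obtain ⟨y, hyT, hωxy, hrad⟩ := rad_step _ hE
        have hPxy : P s(x, y) := by simp [hP]
        have hξ : ξ (c y) = true := by
          rw [hsymm_val] at hωxy
          rw [dif_pos hPxy] at hωxy
          exact hωxy
        have hyY : y ∈ Y η := by
          rw [hYdef]
          refine Finset.mem_filter.2 ⟨hyT, ?_⟩
          rw [← hG' ξ η]
          exact hrad
        rw [if_pos ⟨y, hyY, hξ⟩]
      · rw [if_neg hE]
        by_cases h2 : ∃ y ∈ Y η, ξ (c y) = true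
        · rw [if_pos h2]; exact hW₁0 ξ
        · rw [if_neg h2]
    calc (∑ ξ, if k + 1 ≤ rad (graphOn S (ε.symm (ξ, η))) x then W₁ ξ else 0)
        ≤ ∑ ξ, (if ∃ y ∈ Y η, ξ (c y) = true then W₁ ξ else 0) :=
          Finset.sum_le_sum fun ξ _ => hmono ξ
      _ = ∑ ξ, (W₁ ξ - (if ∀ y ∈ Y η, ξ (c y) = false then W₁ ξ else 0)) := by
          refine Finset.sum_congr rfl fun ξ _ => ?_
          by_cases h2 : ∃ y ∈ Y η, ξ (c y) = true
          · obtain ⟨y, hy, hyt⟩ := h2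
            have hnall : ¬ ∀ y ∈ Y η, ξ (c y) = false := by
              intro hall
              rw [hall y hy] at hyt
              exact Bool.false_ne_true hyt
            rw [if_pos ⟨y, hy, hyt⟩, if_neg hnall, sub_zero]
          · have hall : ∀ y ∈ Y η, ξ (c y) = false := by
              intro y hy
              cases hb : ξ (c y)
              · rfl
              · exact absurd ⟨y, hy, hb⟩ h2
            rw [if_neg h2, if_pos hall, sub_self]
      _ = 1 - q ^ (Y η).card := by
          rw [Finset.sum_sub_distrib, total₁, hconstr η]
  -- step A
  have stepA : Pr n (fun ω => k + 1 ≤ rad (graphOn S ω) x)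
      ≤ ∑ η, W₂ η * (1 - q ^ (Y η).card) := by
    rw [Pr_eq]
    calc (∑ ω, if k + 1 ≤ rad (graphOn S ω) x then W n ω else 0)
        = ∑ ξ, ∑ η, (if k + 1 ≤ rad (graphOn S (ε.symm (ξ, η))) x
            then W n (ε.symm (ξ, η)) else 0) := hreindex _
      _ = ∑ η, ∑ ξ, (if k + 1 ≤ rad (graphOn S (ε.symm (ξ, η))) x
            then W n (ε.symm (ξ, η)) else 0) := Finset.sum_comm
      _ = ∑ η, ∑ ξ, W₂ η * (if k + 1 ≤ rad (graphOn S (ε.symm (ξ, η))) x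
            then W₁ ξ else 0) := by
          refine Finset.sum_congr rfl fun η _ => Finset.sum_congr rfl fun ξ _ => ?_
          by_cases hE : k + 1 ≤ rad (graphOn S (ε.symm (ξ, η))) x
          · rw [if_pos hE, if_pos hE, hW12, mul_comm]
          · rw [if_neg hE, if_neg hE, mul_zero]
      _ = ∑ η, W₂ η * ∑ ξ, (if k + 1 ≤ rad (graphOn S (ε.symm (ξ, η))) x
            then W₁ ξ else 0) :=
          Finset.sum_congr rfl fun η _ => (Finset.mul_sum _ _ _).symm
      _ ≤ ∑ η, W₂ η * (1 - q ^ (Y η).card) :=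
          Finset.sum_le_sum fun η _ =>
            mul_le_mul_of_nonneg_left (inner_le η) (hW₂0 η)
  -- Jensen
  set t : ℝ := ∑ η, W₂ η * (((Y η).card : ℕ) : ℝ) with htdef
  have jensen : ∑ η, W₂ η * (1 - q ^ (Y η).card) ≤ 1 - q ^ t := by
    have hconv : ConvexOn ℝ Set.univ (fun u : ℝ => q ^ u) := by
      have h1 := convexOn_exp.comp_affineMap
        ((Real.log q • (LinearMap.id : ℝ →ₗ[ℝ] ℝ)).toAffineMap)
      have h2 : ConvexOn ℝ Set.univ (fun u : ℝ => Real.exp (Real.log q * u)) := by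
        simpa [Function.comp_def] using h1
      convert h2 using 1
      funext u
      rw [Real.rpow_def_of_pos hq0]
    have hjen := hconv.map_sum_le (t := Finset.univ) (w := W₂)
      (p := fun η => (((Y η).card : ℕ) : ℝ))
      (fun η _ => hW₂0 η) total₂ (fun η _ => Set.mem_univ _)
    simp only [smul_eq_mul] at hjen
    have hexpand : ∑ η, W₂ η * (1 - q ^ (Y η).card)
        = 1 - ∑ η, W₂ η * q ^ ((((Y η).card : ℕ)) : ℝ) := by
      have hper : ∀ η, W₂ η * (1 - q ^ (Y η).card)
          = W₂ η - W₂ η * q ^ ((((Y η).card : ℕ)) : ℝ) := by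
        intro η
        rw [Real.rpow_natCast]
        ring
      rw [Finset.sum_congr rfl fun η _ => hper η, Finset.sum_sub_distrib, total₂]
    rw [hexpand, htdef]
    linarith [hjen]
  -- identification of t
  have ht_eq : t = ∑ y ∈ T, Pr n (fun ω => k ≤ rad (graphOn T ω) y) := by
    have hcardsum : ∀ η, (((Y η).card : ℕ) : ℝ)
        = ∑ y ∈ T, (if k ≤ rad (G' η) y then (1 : ℝ) else 0) := by
      intro η
      rw [Finset.sum_boole, hYdef]
    calc t = ∑ η, W₂ η * (((Y η).card : ℕ) : ℝ) := htdef
      _ = ∑ η, ∑ y ∈ T, W₂ η * (if k ≤ rad (G' η) y then (1 : ℝ) else 0) := by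
          refine Finset.sum_congr rfl fun η _ => ?_
          rw [hcardsum η, Finset.mul_sum]
      _ = ∑ y ∈ T, ∑ η, W₂ η * (if k ≤ rad (G' η) y then (1 : ℝ) else 0) :=
          Finset.sum_comm
      _ = ∑ y ∈ T, Pr n (fun ω => k ≤ rad (graphOn T ω) y) := by
          refine Finset.sum_congr rfl fun y hy => ?_
          rw [Pr_eq]
          calc (∑ η, W₂ η * (if k ≤ rad (G' η) y then (1 : ℝ) else 0))
              = ∑ η, ∑ ξ, W₁ ξ * (if k ≤ rad (G' η) y then W₂ η else 0) := by
                refine Finset.sum_congr rfl fun η _ => ?_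
                rw [← Finset.sum_mul, total₁, one_mul]
                by_cases hc : k ≤ rad (G' η) y
                · rw [if_pos hc, if_pos hc, mul_one]
                · rw [if_neg hc, if_neg hc, mul_zero]
            _ = ∑ ξ, ∑ η, W₁ ξ * (if k ≤ rad (G' η) y then W₂ η else 0) :=
                Finset.sum_comm
            _ = ∑ ξ, ∑ η, (if k ≤ rad (graphOn T (ε.symm (ξ, η))) y
                  then W n (ε.symm (ξ, η)) else 0) := by
                refine Finset.sum_congr rfl fun ξ _ => Finset.sum_congr rfl fun η _ => ?_
                rw [hG' ξ η, hW12]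
                by_cases hc : k ≤ rad (G' η) y
                · rw [if_pos hc, if_pos hc]
                · rw [if_neg hc, if_neg hc, mul_zero]
            _ = ∑ ω, (if k ≤ rad (graphOn T ω) y then W n ω else 0) :=
                (hreindex (fun ω => if k ≤ rad (graphOn T ω) y
                  then W n ω else 0)).symm
  -- bound on t
  have htle : t ≤ ((n : ℝ) - 1) * s := by
    rw [ht_eq]
    have hcard : (T.card : ℝ) ≤ (n : ℝ) - 1 := by
      have h1 : T.card + 1 ≤ n := by
        rw [hT]
        have he := Finset.card_erase_of_mem hx
        have hSle : S.card ≤ n := by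
          have := Finset.card_le_univ S
          simpa using this
        have hS1 : 1 ≤ S.card := Finset.card_pos.2 ⟨x, hx⟩
        omega
      have h2 := (Nat.cast_le (α := ℝ)).2 h1
      push_cast at h2
      linarith
    calc ∑ y ∈ T, Pr n (fun ω => k ≤ rad (graphOn T ω) y)
        ≤ ∑ _y ∈ T, s := Finset.sum_le_sum fun y hy => hIH y hy
      _ = T.card * s := by rw [Finset.sum_const, nsmul_eq_mul]
      _ ≤ ((n : ℝ) - 1) * s := mul_le_mul_of_nonneg_right hcard hs0
  calc Pr n (fun ω => k + 1 ≤ rad (graphOn S ω) x)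
      ≤ ∑ η, W₂ η * (1 - q ^ (Y η).card) := stepA
    _ ≤ 1 - q ^ t := jensen
    _ ≤ 1 - q ^ (((n : ℝ) - 1) * s) := by
        have := Real.rpow_le_rpow_of_exponent_ge hq0 hq1 htle
        linarith

/-- The key tail estimate: `P(rad(x) ≥ k) ≤ 3/k` in any induced subgraph. -/
lemma key (hn : 2 ≤ n) : ∀ k : ℕ, 1 ≤ k → ∀ S : Finset (Fin n), ∀ x ∈ S,
    Pr n (fun ω => k ≤ rad (graphOn S ω) x) ≤ 3 / (k : ℝ) := by
  have hn1 : 1 ≤ n := by omega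
  intro k
  induction k with
  | zero => intro h; omega
  | succ k ih =>
    intro _ S x hx
    rcases Nat.eq_zero_or_pos k with rfl | hk
    · calc Pr n (fun ω => 0 + 1 ≤ rad (graphOn S ω) x) ≤ 1 := Pr_le_one hn1 _
        _ ≤ 3 / (((0 : ℕ) + 1 : ℕ) : ℝ) := by norm_num
    · set s : ℝ := min 1 (3 / (k : ℝ)) with hs
      have hkpos : (0 : ℝ) < (k : ℝ) := by exact_mod_cast hk
      have hs0 : 0 ≤ s := le_min zero_le_one (by positivity)
      have hs1 : s ≤ 1 := min_le_left _ _
      have hIH : ∀ y ∈ S.erase x,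
          Pr n (fun ω => k ≤ rad (graphOn (S.erase x) ω) y) ≤ s := by
        intro y hy
        exact le_min (Pr_le_one hn1 _) (ih hk (S.erase x) y hy)
      calc Pr n (fun ω => k + 1 ≤ rad (graphOn S ω) x)
          ≤ 1 - (1 - (n : ℝ)⁻¹) ^ (((n : ℝ) - 1) * s) := prob_core hn hx k hs0 hIH
        _ ≤ s - s ^ 2 / 3 := anal hn hs0 hs1
        _ ≤ 3 / ((k : ℝ) + 1) := min_step hk
        _ = 3 / (((k + 1 : ℕ)) : ℝ) := by push_cast; ring

lemma W_nonneg (hn : 1 ≤ n) (ω : Conf n) : 0 ≤ W n ω := prod_w_nonneg hn ω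

lemma sum_W_ind (hn : 2 ≤ n) (A : Conf n → Prop) [DecidablePred A] :
    ∑ ω, W n ω * (if A ω then (1 : ℝ) else 0) = Pr n A := by
  rw [Pr_eq]
  refine Finset.sum_congr rfl fun ω _ => ?_
  by_cases h : A ω <;> simp [h]

lemma harmonic_le (K : ℕ) :
    ∑ k ∈ Finset.Icc 1 K, (1 / (k : ℝ)) ≤ 1 + Real.log K := by
  induction K with
  | zero => simp
  | succ K ih =>
    rcases Nat.eq_zero_or_pos K with rfl | hK
    · norm_num
    · rw [Finset.sum_Icc_succ_top (by omega : 1 ≤ K + 1)]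
      have hKpos : (0 : ℝ) < (K : ℝ) := by exact_mod_cast hK
      have h1 : Real.log ((K : ℝ) / ((K : ℝ) + 1)) ≤ (K : ℝ) / ((K : ℝ) + 1) - 1 :=
        Real.log_le_sub_one_of_pos (by positivity)
      have h2 : Real.log ((K : ℝ) / ((K : ℝ) + 1))
          = Real.log (K : ℝ) - Real.log ((K : ℝ) + 1) :=
        Real.log_div (ne_of_gt hKpos) (by positivity)
      have h3 : (K : ℝ) / ((K : ℝ) + 1) - 1 = -(1 / ((K : ℝ) + 1)) := by
        field_simp
        ring
      rw [h2, h3] at h1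
      push_cast
      linarith

lemma min_eq_sum_ind (R K : ℕ) :
    ((min R K : ℕ) : ℝ) = ∑ k ∈ Finset.Icc 1 K, (if k ≤ R then (1 : ℝ) else 0) := by
  classical
  rw [Finset.sum_boole]
  norm_cast
  have hfil : Finset.filter (fun k => k ≤ R) (Finset.Icc 1 K)
      = Finset.Icc 1 (min R K) := by
    ext a
    simp only [Finset.mem_filter, Finset.mem_Icc]
    omega
  rw [hfil, Nat.card_Icc]
  omega

lemma erMeasure_singleton (hn : 2 ≤ n) (ω : Conf n) :
    ((erMeasure n) {ω}).toReal = W n ω := by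
  have h1 : ({ω} : Set (Conf n)) = Set.univ.pi (fun e : Sym2 (Fin n) => ({ω e} : Set Bool)) := by
    ext ω'
    simp [Set.mem_pi, funext_iff]
  rw [erMeasure, h1, MeasureTheory.Measure.pi_pi, ENNReal.toReal_prod]
  refine Finset.prod_congr rfl fun e _ => ?_
  rw [PMF.toMeasure_apply_singleton _ _ (measurableSet_singleton _)]
  have hinvle : ((n : ℝ≥0∞))⁻¹ ≤ 1 := by
    rw [ENNReal.inv_le_one]
    exact_mod_cast (by omega : 1 ≤ n)
  have hmin : min ((n : ℝ≥0∞))⁻¹ 1 = (n : ℝ≥0∞)⁻¹ := min_eq_left hinvle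
  rw [PMF.bernoulli_apply, hmin]
  cases hb : ω e
  · simp only [cond_false]
    rw [ENNReal.coe_toReal, NNReal.coe_sub (le_of_le_of_eq (ENNReal.toNNReal_mono ENNReal.one_ne_top hinvle) ENNReal.toNNReal_one)]
    simp [w, ENNReal.toReal_inv]
  · simp only [cond_true]
    simp [w, ENNReal.toReal_inv]

lemma integral_eq_sum (hn : 2 ≤ n) (f : Conf n → ℝ) :
    (∫ ω, f ω ∂ erMeasure n) = ∑ ω, W n ω * f ω := by
  rw [MeasureTheory.integral_fintype (Integrable.of_finite)]
  refine Finset.sum_congr rfl fun ω _ => ?_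
  rw [Measure.real, erMeasure_singleton hn, smul_eq_mul]

end SBD

/-! ### The main theorem -/

/-- There is a universal constant `C > 0` such that for every `n ≥ 2`
and every `B ≥ 1`, the critical Erdős–Rényi graph `G(n, 1/n)` satisfies
`E[ (1/n) Σ_{x ∈ [n]} ( diam(C(x)) ∧ (B n^{1/3}) ) ] ≤ C log(Bn)`, i.e.
`E[ E_S[ diam(S₁) ∧ (B n^{1/3}) ] ] ≤ C log(Bn)`. -/
theorem size_biased_diam_first_moment :
    ∃ C > (0 : ℝ), ∀ n : ℕ, 2 ≤ n → ∀ B : ℝ, 1 ≤ B →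
      (∫ ω, (1 / (n : ℝ)) * ∑ x : Fin n,
          min (compDiam (graphOf ω) x : ℝ) (B * (n : ℝ) ^ ((1 : ℝ) / 3)) ∂ erMeasure n)
        ≤ C * Real.log (B * n) := by
  refine ⟨30, by norm_num, ?_⟩
  intro n hn B hB
  classical
  have hn1 : 1 ≤ n := by omega
  have hnR : (2 : ℝ) ≤ (n : ℝ) := by exact_mod_cast hn
  set M : ℝ := B * (n : ℝ) ^ ((1 : ℝ) / 3) with hM
  have hnpow1 : (1 : ℝ) ≤ (n : ℝ) ^ ((1 : ℝ) / 3) := by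
    calc (1 : ℝ) = 1 ^ ((1 : ℝ) / 3) := (Real.one_rpow _).symm
      _ ≤ (n : ℝ) ^ ((1 : ℝ) / 3) :=
        Real.rpow_le_rpow zero_le_one (by linarith) (by norm_num)
  have hM1 : 1 ≤ M := by
    rw [hM]
    nlinarith
  have hMn : M ≤ B * n := by
    have h13 : (n : ℝ) ^ ((1 : ℝ) / 3) ≤ (n : ℝ) := by
      calc (n : ℝ) ^ ((1 : ℝ) / 3) ≤ (n : ℝ) ^ (1 : ℝ) :=
            Real.rpow_le_rpow_of_exponent_le (by linarith) (by norm_num)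
        _ = (n : ℝ) := Real.rpow_one _
    rw [hM]
    nlinarith
  set K : ℕ := ⌈M⌉₊ with hK
  have hMK : M ≤ (K : ℝ) := Nat.le_ceil M
  have hK1 : 1 ≤ K := Nat.one_le_ceil_iff.2 (by linarith)
  have hKpos : (0 : ℝ) < (K : ℝ) := by exact_mod_cast hK1
  have hKle : (K : ℝ) ≤ 2 * (B * n) := by
    have := Nat.ceil_lt_add_one (by linarith : (0 : ℝ) ≤ M)
    nlinarith
  rw [SBD.integral_eq_sum hn]
  have hpoint : ∀ ω : SBD.Conf n,
      (1 / (n : ℝ)) * ∑ x : Fin n, min ((compDiam (graphOf ω) x : ℕ) : ℝ) M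
        ≤ (1 / (n : ℝ)) * ∑ x : Fin n, (2 * ∑ k ∈ Finset.Icc 1 K,
            (if k ≤ SBD.rad (SBD.graphOn Finset.univ ω) x then (1 : ℝ) else 0)) := by
    intro ω
    refine mul_le_mul_of_nonneg_left ?_ (by positivity)
    refine Finset.sum_le_sum fun x _ => ?_
    set R := SBD.rad (SBD.graphOn Finset.univ ω) x with hR
    have hD : compDiam (graphOf ω) x ≤ 2 * R := by
      rw [SBD.graphOf_eq ω]
      exact SBD.compDiam_le_two_rad _ x
    calc min ((compDiam (graphOf ω) x : ℕ) : ℝ) M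
        ≤ min ((compDiam (graphOf ω) x : ℕ) : ℝ) (K : ℝ) :=
          min_le_min le_rfl hMK
      _ = ((min (compDiam (graphOf ω) x) K : ℕ) : ℝ) := (Nat.cast_min _ _).symm
      _ ≤ ((2 * min R K : ℕ) : ℝ) := by
          have hmm : min (compDiam (graphOf ω) x) K ≤ 2 * min R K := by omega
          exact_mod_cast hmm
      _ = 2 * ((min R K : ℕ) : ℝ) := by push_cast; ring
      _ = 2 * ∑ k ∈ Finset.Icc 1 K, (if k ≤ R then (1 : ℝ) else 0) := by
          rw [SBD.min_eq_sum_ind]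
  have hswap : ∑ ω, SBD.W n ω * ((1 / (n : ℝ)) * ∑ x : Fin n,
        (2 * ∑ k ∈ Finset.Icc 1 K,
          (if k ≤ SBD.rad (SBD.graphOn Finset.univ ω) x then (1 : ℝ) else 0)))
      = (2 / (n : ℝ)) * ∑ x : Fin n, ∑ k ∈ Finset.Icc 1 K,
          SBD.Pr n (fun ω => k ≤ SBD.rad (SBD.graphOn Finset.univ ω) x) := by
    calc ∑ ω, SBD.W n ω * ((1 / (n : ℝ)) * ∑ x : Fin n,
          (2 * ∑ k ∈ Finset.Icc 1 K,
            (if k ≤ SBD.rad (SBD.graphOn Finset.univ ω) x then (1 : ℝ) else 0)))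
        = ∑ ω : SBD.Conf n, ∑ x : Fin n, ∑ k ∈ Finset.Icc 1 K, (2 / (n : ℝ)) *
            (SBD.W n ω *
              (if k ≤ SBD.rad (SBD.graphOn Finset.univ ω) x then (1 : ℝ) else 0)) := by
          refine Finset.sum_congr rfl fun ω _ => ?_
          simp only [Finset.mul_sum]
          refine Finset.sum_congr rfl fun x _ => Finset.sum_congr rfl fun k _ => by ring
      _ = ∑ x : Fin n, ∑ k ∈ Finset.Icc 1 K, (2 / (n : ℝ)) * ∑ ω : SBD.Conf n,
            (SBD.W n ω *
              (if k ≤ SBD.rad (SBD.graphOn Finset.univ ω) x then (1 : ℝ) else 0)) := by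
          rw [Finset.sum_comm]
          refine Finset.sum_congr rfl fun x _ => ?_
          rw [Finset.sum_comm]
          refine Finset.sum_congr rfl fun k _ => ?_
          rw [Finset.mul_sum]
      _ = (2 / (n : ℝ)) * ∑ x : Fin n, ∑ k ∈ Finset.Icc 1 K,
            SBD.Pr n (fun ω => k ≤ SBD.rad (SBD.graphOn Finset.univ ω) x) := by
          rw [Finset.mul_sum]
          refine Finset.sum_congr rfl fun x _ => ?_
          rw [Finset.mul_sum]
          refine Finset.sum_congr rfl fun k _ => ?_
          rw [SBD.sum_W_ind hn]
  calc (∑ ω, SBD.W n ω * ((1 / (n : ℝ)) * ∑ x : Fin n,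
          min ((compDiam (graphOf ω) x : ℕ) : ℝ) M))
      ≤ ∑ ω, SBD.W n ω * ((1 / (n : ℝ)) * ∑ x : Fin n,
          (2 * ∑ k ∈ Finset.Icc 1 K,
            (if k ≤ SBD.rad (SBD.graphOn Finset.univ ω) x then (1 : ℝ) else 0))) :=
        Finset.sum_le_sum fun ω _ =>
          mul_le_mul_of_nonneg_left (hpoint ω) (SBD.W_nonneg hn1 ω)
    _ = (2 / (n : ℝ)) * ∑ x : Fin n, ∑ k ∈ Finset.Icc 1 K,
          SBD.Pr n (fun ω => k ≤ SBD.rad (SBD.graphOn Finset.univ ω) x) := hswap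
    _ ≤ (2 / (n : ℝ)) * ∑ x : Fin n, ∑ k ∈ Finset.Icc 1 K, 3 / (k : ℝ) := by
        refine mul_le_mul_of_nonneg_left ?_ (by positivity)
        refine Finset.sum_le_sum fun x _ => Finset.sum_le_sum fun k hk => ?_
        exact SBD.key hn k (Finset.mem_Icc.1 hk).1 Finset.univ x (Finset.mem_univ x)
    _ = 6 * ∑ k ∈ Finset.Icc 1 K, 1 / (k : ℝ) := by
        rw [Finset.sum_const, Finset.card_univ, Fintype.card_fin, nsmul_eq_mul,
          ← mul_assoc]
        have h2n : (2 / (n : ℝ)) * (n : ℝ) = 2 := by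
          field_simp
        rw [h2n, Finset.mul_sum, Finset.mul_sum]
        refine Finset.sum_congr rfl fun k _ => by ring
    _ ≤ 6 * (1 + Real.log K) := by
        have := SBD.harmonic_le K
        linarith
    _ ≤ 30 * Real.log (B * n) := by
        have hBn2 : (2 : ℝ) ≤ B * n := by nlinarith
        have hlogBn : Real.log 2 ≤ Real.log (B * n) :=
          Real.log_le_log (by norm_num) hBn2
        have hlog2 : (1 : ℝ) / 3 ≤ Real.log 2 := by
          have := Real.log_two_gt_d9
          linarith
        have hlogK : Real.log K ≤ Real.log 2 + Real.log (B * n) := by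
          calc Real.log K ≤ Real.log (2 * (B * n)) :=
                Real.log_le_log hKpos hKle
            _ = Real.log 2 + Real.log (B * n) :=
                Real.log_mul (by norm_num) (by nlinarith)
        linarith
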